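/- Suppose d ≥ 1, 1 ≤ Δ ≤ n−1, H is (n−Δ−1)-regular, 1 ≤ i ≤ (2/3)dΔ, and dn ≥ 2i + 10d. Then for every d-regular simple graph G on V with exactly i red edges, the number b_{B1+}(G) of Class B1+ octagons in G satisfies 2i(Δ−1)(d−1)·(dn−2i−10d)² − 6i(Δ−1)d³n(d+Δ) ≤ b_{B1+}(G) ≤ 2i(Δ−1)d·(dn)². -/

import Mathlib

open SimpleGraph
open scoped Classical

/-- Distinctness of an 8-tuple, except that `v2 = v7` is allowed. -/
def Distinct8 {n : ℕ} (v0 v1 v2 v3 v4 v5 v6 v7 : Fin n) : Prop :=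
  List.Pairwise (· ≠ ·) [v0, v1, v3, v4, v5, v6] ∧
  (∀ x ∈ [v0, v1, v3, v4, v5, v6], v2 ≠ x ∧ v7 ≠ x)

/-- A Class B1+ octagon in `G` (host graph `H`): `v1v2` is a red edge of `G`; the pair
`v0v1` is red (it may or may not be an edge of `G`); `v0v7` is an edge of `G` (of either
colour); `v3v4` and `v5v6` are black edges of `G`; `v2v3`, `v4v5`, `v6v7` are black
non-edges of `G`; vertices distinct except `v2 = v7` allowed. -/
def OctB1Plus {n : ℕ} (H G : SimpleGraph (Fin n))
    (v0 v1 v2 v3 v4 v5 v6 v7 : Fin n) : Prop :=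
  (G.Adj v1 v2 ∧ Hᶜ.Adj v1 v2) ∧
  Hᶜ.Adj v0 v1 ∧
  G.Adj v0 v7 ∧
  (G.Adj v3 v4 ∧ H.Adj v3 v4) ∧
  (G.Adj v5 v6 ∧ H.Adj v5 v6) ∧
  (¬ G.Adj v2 v3 ∧ H.Adj v2 v3) ∧
  (¬ G.Adj v4 v5 ∧ H.Adj v4 v5) ∧
  (¬ G.Adj v6 v7 ∧ H.Adj v6 v7) ∧
  Distinct8 v0 v1 v2 v3 v4 v5 v6 v7

/-- `b_{B1+}(G)`: the number of Class B1+ octagons in `G`. -/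
noncomputable def bB1 {n : ℕ} (H G : SimpleGraph (Fin n)) : ℕ :=
  Nat.card {v : Fin 8 → Fin n //
    OctB1Plus H G (v 0) (v 1) (v 2) (v 3) (v 4) (v 5) (v 6) (v 7)}

open Finset

section Helpers

noncomputable def odarts {n : ℕ} (K : SimpleGraph (Fin n)) : Finset (Fin n × Fin n) :=
  Finset.univ.filter fun p => K.Adj p.1 p.2

lemma mem_odarts {n : ℕ} {K : SimpleGraph (Fin n)} {p : Fin n × Fin n} :
    p ∈ odarts K ↔ K.Adj p.1 p.2 := by simp [odarts]

lemma odarts_fst {n : ℕ} (K : SimpleGraph (Fin n)) (w : Fin n) :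
    ((odarts K).filter fun p => p.1 = w).card = K.degree w := by
  have h : ((odarts K).filter fun p => p.1 = w) = {w} ×ˢ K.neighborFinset w := by
    ext ⟨a, b⟩
    simp only [Finset.mem_filter, mem_odarts, Finset.mem_product, Finset.mem_singleton,
      SimpleGraph.mem_neighborFinset]
    constructor
    · rintro ⟨hab, rfl⟩; exact ⟨rfl, hab⟩
    · rintro ⟨rfl, hab⟩; exact ⟨hab, rfl⟩
  rw [h, Finset.card_product, Finset.card_singleton, one_mul]
  rfl

lemma odarts_snd {n : ℕ} (K : SimpleGraph (Fin n)) (w : Fin n) :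
    ((odarts K).filter fun p => p.2 = w).card = K.degree w := by
  have h : ((odarts K).filter fun p => p.2 = w) = K.neighborFinset w ×ˢ {w} := by
    ext ⟨a, b⟩
    simp only [Finset.mem_filter, mem_odarts, Finset.mem_product, Finset.mem_singleton,
      SimpleGraph.mem_neighborFinset]
    constructor
    · rintro ⟨hab, rfl⟩; exact ⟨hab.symm, rfl⟩
    · rintro ⟨hab, rfl⟩; exact ⟨hab.symm, rfl⟩
  rw [h, Finset.card_product, Finset.card_singleton, mul_one]
  rfl

lemma odarts_card_reg {n d : ℕ} {K : SimpleGraph (Fin n)} (h : K.IsRegularOfDegree d) :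
    (odarts K).card = n * d := by
  rw [Finset.card_eq_sum_card_fiberwise (f := Prod.fst) (t := Finset.univ)
    (fun x _ => Finset.mem_univ _)]
  have h2 : ∀ v ∈ (Finset.univ : Finset (Fin n)),
      ((odarts K).filter fun p => p.1 = v).card = d := by
    intro v _; rw [odarts_fst]; exact h v
  rw [Finset.sum_congr rfl h2, Finset.sum_const, Finset.card_univ, Fintype.card_fin,
    smul_eq_mul]

lemma odarts_card_ncard {n : ℕ} (K : SimpleGraph (Fin n)) :
    (odarts K).card = 2 * K.edgeSet.ncard := by
  have h1 : K.edgeSet.ncard = K.edgeFinset.card := by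
    rw [Set.ncard_eq_toFinset_card']
    congr 1
  rw [h1, two_mul_card_edgeFinset]
  congr 1

lemma odarts_split {n : ℕ} (G H : SimpleGraph (Fin n)) :
    (odarts (G ⊓ H)).card + (odarts (G ⊓ Hᶜ)).card = (odarts G).card := by
  have hu : odarts (G ⊓ H) ∪ odarts (G ⊓ Hᶜ) = odarts G := by
    ext p
    simp only [Finset.mem_union, mem_odarts, inf_adj, compl_adj]
    constructor
    · tauto
    · intro h
      by_cases hH : H.Adj p.1 p.2
      · tauto
      · exact Or.inr ⟨h, h.ne, hH⟩
  have hd : Disjoint (odarts (G ⊓ H)) (odarts (G ⊓ Hᶜ)) := by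
    rw [Finset.disjoint_left]
    intro p h1 h2
    rw [mem_odarts, inf_adj] at h1 h2
    exact h2.2.2 h1.2
  rw [← Finset.card_union_of_disjoint hd, hu]

lemma compl_regular {n Δ : ℕ} {H : SimpleGraph (Fin n)} (hΔ : Δ + 1 ≤ n)
    (hH : H.IsRegularOfDegree (n - Δ - 1)) : Hᶜ.IsRegularOfDegree Δ := by
  have := hH.compl
  rwa [Fintype.card_fin, show n - 1 - (n - Δ - 1) = Δ by omega] at this

lemma filt_fst_mem {V : Type*} [DecidableEq V] (B : Finset (V × V)) (d : ℕ)
    (hd : ∀ w, (B.filter fun b => b.1 = w).card ≤ d) (S : Finset V) :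
    (B.filter fun b => b.1 ∈ S).card ≤ S.card * d := by
  have hsub : (B.filter fun b => b.1 ∈ S) ⊆ S.biUnion (fun w => B.filter fun b => b.1 = w) := by
    intro b hb
    rw [Finset.mem_filter] at hb
    exact Finset.mem_biUnion.2 ⟨b.1, hb.2, Finset.mem_filter.2 ⟨hb.1, rfl⟩⟩
  calc (B.filter fun b => b.1 ∈ S).card ≤ _ := Finset.card_le_card hsub
    _ ≤ ∑ w ∈ S, (B.filter fun b => b.1 = w).card := Finset.card_biUnion_le
    _ ≤ ∑ _w ∈ S, d := Finset.sum_le_sum (fun w _ => hd w)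
    _ = S.card * d := by rw [Finset.sum_const, smul_eq_mul]

lemma filt_snd_mem {V : Type*} [DecidableEq V] (B : Finset (V × V)) (d : ℕ)
    (hd : ∀ w, (B.filter fun b => b.2 = w).card ≤ d) (S : Finset V) :
    (B.filter fun b => b.2 ∈ S).card ≤ S.card * d := by
  have hsub : (B.filter fun b => b.2 ∈ S) ⊆ S.biUnion (fun w => B.filter fun b => b.2 = w) := by
    intro b hb
    rw [Finset.mem_filter] at hb
    exact Finset.mem_biUnion.2 ⟨b.2, hb.2, Finset.mem_filter.2 ⟨hb.1, rfl⟩⟩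
  calc (B.filter fun b => b.2 ∈ S).card ≤ _ := Finset.card_le_card hsub
    _ ≤ ∑ w ∈ S, (B.filter fun b => b.2 = w).card := Finset.card_biUnion_le
    _ ≤ ∑ _w ∈ S, d := Finset.sum_le_sum (fun w _ => hd w)
    _ = S.card * d := by rw [Finset.sum_const, smul_eq_mul]

lemma filt_avoid {V : Type*} [DecidableEq V] (B : Finset (V × V)) (d : ℕ)
    (hd1 : ∀ w, (B.filter fun b => b.1 = w).card ≤ d)
    (hd2 : ∀ w, (B.filter fun b => b.2 = w).card ≤ d) (S : Finset V) :
    (B.card : ℤ) - S.card * (2 * d) ≤ ((B.filter fun b => b.1 ∉ S ∧ b.2 ∉ S).card : ℤ) := by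
  have hsplit := Finset.card_filter_add_card_filter_not
    (s := B) (p := fun b => b.1 ∉ S ∧ b.2 ∉ S)
  have hneg : (B.filter fun b => ¬(b.1 ∉ S ∧ b.2 ∉ S)) =
      B.filter fun b => (b.1 ∈ S ∨ b.2 ∈ S) := by
    ext b
    simp only [Finset.mem_filter]
    tauto
  have hcard : (B.filter fun b => ¬(b.1 ∉ S ∧ b.2 ∉ S)).card ≤ S.card * (2 * d) := by
    rw [hneg, Finset.filter_or]
    calc _ ≤ (B.filter fun b => b.1 ∈ S).card + (B.filter fun b => b.2 ∈ S).card :=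
          Finset.card_union_le _ _
      _ ≤ S.card * d + S.card * d := add_le_add (filt_fst_mem B d hd1 S) (filt_snd_mem B d hd2 S)
      _ = S.card * (2 * d) := by ring
  have h2 : ((B.filter fun b => ¬(b.1 ∉ S ∧ b.2 ∉ S)).card : ℤ) ≤ S.card * (2 * d) := by
    exact_mod_cast hcard
  push_cast [← hsplit]
  linarith

lemma pair_bad1 {V : Type*} [DecidableEq V] (B : Finset (V × V)) (d : ℕ)
    (hd1 : ∀ w, (B.filter fun b => b.1 = w).card ≤ d) (S : Finset V) :
    ((B ×ˢ B).filter fun q => q.1.1 ∈ S).card ≤ S.card * d * B.card := by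
  have he : ((B ×ˢ B).filter fun q => q.1.1 ∈ S) = (B.filter fun b => b.1 ∈ S) ×ˢ B := by
    ext ⟨b1, b2⟩
    simp only [Finset.mem_filter, Finset.mem_product]
    tauto
  rw [he, Finset.card_product]
  exact Nat.mul_le_mul_right _ (filt_fst_mem B d hd1 S)

lemma pair_bad3 {V : Type*} [DecidableEq V] (B : Finset (V × V)) (d : ℕ)
    (hd2 : ∀ w, (B.filter fun b => b.2 = w).card ≤ d) (S : Finset V) :
    ((B ×ˢ B).filter fun q => q.2.2 ∈ S).card ≤ B.card * (S.card * d) := by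
  have he : ((B ×ˢ B).filter fun q => q.2.2 ∈ S) = B ×ˢ (B.filter fun b => b.2 ∈ S) := by
    ext ⟨b1, b2⟩
    simp only [Finset.mem_filter, Finset.mem_product]
    tauto
  rw [he, Finset.card_product]
  exact Nat.mul_le_mul_left _ (filt_snd_mem B d hd2 S)

lemma pair_bad2 {V : Type*} [DecidableEq V] (B : Finset (V × V)) (d k : ℕ)
    (hd1 : ∀ w, (B.filter fun b => b.1 = w).card ≤ d)
    (Sf : V × V → Finset V) (hS : ∀ b, (Sf b).card ≤ k) :
    ((B ×ˢ B).filter fun q => q.2.1 ∈ Sf q.1).card ≤ B.card * (k * d) := by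
  have hsub : ((B ×ˢ B).filter fun q => q.2.1 ∈ Sf q.1) ⊆
      B.biUnion (fun b1 => {b1} ×ˢ (B.filter fun b => b.1 ∈ Sf b1)) := by
    rintro ⟨b1, b2⟩ hq
    simp only [Finset.mem_filter, Finset.mem_product] at hq
    apply Finset.mem_biUnion.2
    exact ⟨b1, hq.1.1, Finset.mem_product.2 ⟨Finset.mem_singleton_self b1,
      Finset.mem_filter.2 ⟨hq.1.2, hq.2⟩⟩⟩
  calc _ ≤ _ := Finset.card_le_card hsub
    _ ≤ ∑ b1 ∈ B, ({b1} ×ˢ (B.filter fun b => b.1 ∈ Sf b1)).card := Finset.card_biUnion_le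
    _ ≤ ∑ _b1 ∈ B, k * d := by
        apply Finset.sum_le_sum
        intro b1 _
        rw [Finset.card_product, Finset.card_singleton, one_mul]
        exact le_trans (filt_fst_mem B d hd1 (Sf b1)) (Nat.mul_le_mul_right _ (hS b1))
    _ = B.card * (k * d) := by rw [Finset.sum_const, smul_eq_mul]

def Fset {n : ℕ} (v0 v1 v2 v7 : Fin n) : Finset (Fin n) := {v0, v1, v2, v7}

lemma Fset_card {n : ℕ} (v0 v1 v2 v7 : Fin n) : (Fset v0 v1 v2 v7).card ≤ 4 := by
  have h1 : ({v2, v7} : Finset (Fin n)).card ≤ 2 :=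
    le_trans (Finset.card_insert_le _ _) (by simp)
  have h2 : ({v1, v2, v7} : Finset (Fin n)).card ≤ 3 :=
    le_trans (Finset.card_insert_le _ _) (by omega)
  exact le_trans (Finset.card_insert_le _ _) (by omega)

def DpartQ {n : ℕ} (v1 v2 v0 v7 : Fin n) (q : (Fin n × Fin n) × (Fin n × Fin n)) : Prop :=
  (q.1.1 ∉ Fset v0 v1 v2 v7 ∧ q.1.2 ∉ Fset v0 v1 v2 v7) ∧
  (q.2.1 ∉ insert q.1.1 (insert q.1.2 (Fset v0 v1 v2 v7)) ∧
   q.2.2 ∉ insert q.1.1 (insert q.1.2 (Fset v0 v1 v2 v7)))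

def CcQ {n : ℕ} (H G : SimpleGraph (Fin n)) (v2 v7 : Fin n)
    (q : (Fin n × Fin n) × (Fin n × Fin n)) : Prop :=
  (¬ G.Adj v2 q.1.1 ∧ H.Adj v2 q.1.1) ∧
  (¬ G.Adj q.1.2 q.2.1 ∧ H.Adj q.1.2 q.2.1) ∧
  (¬ G.Adj q.2.2 v7 ∧ H.Adj q.2.2 v7)

/-- Key lower bound on the number of good dart pairs for a fixed `(v1,v2,v0,v7)`. -/
lemma key_bound {n d Δ : ℕ} (H G : SimpleGraph (Fin n)) (B : Finset (Fin n × Fin n))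
    (hb1 : ∀ w, (B.filter fun b => b.1 = w).card ≤ d)
    (hb2 : ∀ w, (B.filter fun b => b.2 = w).card ≤ d)
    (hnb : ∀ w, (G.neighborFinset w).card ≤ d)
    (hnbc : ∀ w, (Hᶜ.neighborFinset w).card ≤ Δ)
    (hm8 : (8 : ℤ) * d ≤ (B.card : ℤ))
    (v1 v2 v0 v7 : Fin n) :
    max (((B.card : ℤ) - 8 * d) * ((B.card : ℤ) - 12 * d)) 0 - 3 * (Δ + d) * d * B.card ≤
      (((B ×ˢ B).filter fun q => DpartQ v1 v2 v0 v7 q ∧ CcQ H G v2 v7 q).card : ℤ) := by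
  classical
  set m : ℤ := (B.card : ℤ) with hm
  set K : ℤ := (m - 8 * d) * (m - 12 * d) with hK
  set Pd : Finset ((Fin n × Fin n) × (Fin n × Fin n)) :=
    (B ×ˢ B).filter (DpartQ v1 v2 v0 v7) with hPd
  have hQeq : ((B ×ˢ B).filter fun q => DpartQ v1 v2 v0 v7 q ∧ CcQ H G v2 v7 q) =
      Pd.filter (CcQ H G v2 v7) := by
    rw [hPd, Finset.filter_filter]
  -- bad bound
  have hbadcard : ((Pd.filter fun q => ¬ CcQ H G v2 v7 q).card : ℤ) ≤ 3 * (Δ + d) * d * m := by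
    set S1 := Hᶜ.neighborFinset v2 ∪ G.neighborFinset v2 with hS1
    set S3 := Hᶜ.neighborFinset v7 ∪ G.neighborFinset v7 with hS3
    set Sf : (Fin n × Fin n) → Finset (Fin n) :=
      fun b1 => Hᶜ.neighborFinset b1.2 ∪ G.neighborFinset b1.2 with hSf
    set T1 := (B ×ˢ B).filter (fun q => q.1.1 ∈ S1) with hT1
    set T2 := (B ×ˢ B).filter (fun q => q.2.1 ∈ Sf q.1) with hT2
    set T3 := (B ×ˢ B).filter (fun q => q.2.2 ∈ S3) with hT3
    have hsub : Pd.filter (fun q => ¬ CcQ H G v2 v7 q) ⊆ T1 ∪ T2 ∪ T3 := by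
      rintro ⟨⟨a3, a4⟩, ⟨a5, a6⟩⟩ hq
      rw [Finset.mem_filter] at hq
      obtain ⟨hqPd, hnc⟩ := hq
      rw [hPd, Finset.mem_filter] at hqPd
      obtain ⟨hqBB, hD⟩ := hqPd
      obtain ⟨⟨hD11, hD12⟩, hD21, hD22⟩ := hD
      have hc : ¬ (¬ G.Adj v2 a3 ∧ H.Adj v2 a3) ∨ ¬ (¬ G.Adj a4 a5 ∧ H.Adj a4 a5) ∨
          ¬ (¬ G.Adj a6 v7 ∧ H.Adj a6 v7) := by
        by_contra hcon
        push_neg at hcon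
        exact hnc ⟨hcon.1, hcon.2.1, hcon.2.2⟩
      rcases hc with hc | hc | hc
      · refine Finset.mem_union.2 (Or.inl (Finset.mem_union.2 (Or.inl ?_)))
        rw [hT1, Finset.mem_filter]
        refine ⟨hqBB, ?_⟩
        rw [hS1, Finset.mem_union]
        by_cases hg : G.Adj v2 a3
        · exact Or.inr (SimpleGraph.mem_neighborFinset _ _ _ |>.2 hg)
        · have hh : ¬ H.Adj v2 a3 := by tauto
          have hne : v2 ≠ a3 := by
            intro he
            apply hD11
            rw [← he]
            simp [Fset]
          exact Or.inl ((SimpleGraph.mem_neighborFinset _ _ _).2 (((H.compl_adj) _ _).2 ⟨hne, hh⟩))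
      · refine Finset.mem_union.2 (Or.inl (Finset.mem_union.2 (Or.inr ?_)))
        rw [hT2, Finset.mem_filter]
        refine ⟨hqBB, ?_⟩
        rw [hSf]
        simp only [Finset.mem_union]
        by_cases hg : G.Adj a4 a5
        · exact Or.inr ((SimpleGraph.mem_neighborFinset _ _ _).2 hg)
        · have hh : ¬ H.Adj a4 a5 := by tauto
          have hne : a4 ≠ a5 := by
            intro he
            apply hD21
            rw [← he]
            simp
          exact Or.inl ((SimpleGraph.mem_neighborFinset _ _ _).2 (((H.compl_adj) _ _).2 ⟨hne, hh⟩))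
      · refine Finset.mem_union.2 (Or.inr ?_)
        rw [hT3, Finset.mem_filter]
        refine ⟨hqBB, ?_⟩
        rw [hS3, Finset.mem_union]
        by_cases hg : G.Adj a6 v7
        · exact Or.inr ((SimpleGraph.mem_neighborFinset _ _ _).2 hg.symm)
        · have hh : ¬ H.Adj a6 v7 := by tauto
          have hne : v7 ≠ a6 := by
            intro he
            apply hD22
            rw [← he]
            simp [Fset]
          exact Or.inl ((SimpleGraph.mem_neighborFinset _ _ _).2
            (((H.compl_adj) _ _).2 ⟨hne, fun ha => hh ha.symm⟩))
    have hS1c : S1.card ≤ Δ + d :=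
      le_trans (Finset.card_union_le _ _) (add_le_add (hnbc v2) (hnb v2))
    have hS3c : S3.card ≤ Δ + d :=
      le_trans (Finset.card_union_le _ _) (add_le_add (hnbc v7) (hnb v7))
    have hSfc : ∀ b, (Sf b).card ≤ Δ + d := fun b =>
      le_trans (Finset.card_union_le _ _) (add_le_add (hnbc b.2) (hnb b.2))
    have hT1c : T1.card ≤ (Δ + d) * d * B.card :=
      le_trans (pair_bad1 B d hb1 S1)
        (Nat.mul_le_mul_right _ (Nat.mul_le_mul_right _ hS1c))
    have hT2c : T2.card ≤ B.card * ((Δ + d) * d) := pair_bad2 B d (Δ + d) hb1 Sf hSfc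
    have hT3c : T3.card ≤ B.card * ((Δ + d) * d) :=
      le_trans (pair_bad3 B d hb2 S3)
        (Nat.mul_le_mul_left _ (Nat.mul_le_mul_right _ hS3c))
    have hcardle : (Pd.filter fun q => ¬ CcQ H G v2 v7 q).card ≤
        T1.card + T2.card + T3.card := by
      calc _ ≤ (T1 ∪ T2 ∪ T3).card := Finset.card_le_card hsub
        _ ≤ (T1 ∪ T2).card + T3.card := Finset.card_union_le _ _
        _ ≤ T1.card + T2.card + T3.card := by
            have := Finset.card_union_le T1 T2
            omega
    have hmcomm : B.card * ((Δ + d) * d) = (Δ + d) * d * B.card := Nat.mul_comm _ _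
    have hT2c' : T2.card ≤ (Δ + d) * d * B.card := by omega
    have hT3c' : T3.card ≤ (Δ + d) * d * B.card := by omega
    have hfin : (Pd.filter fun q => ¬ CcQ H G v2 v7 q).card ≤
        (Δ + d) * d * B.card + (Δ + d) * d * B.card + (Δ + d) * d * B.card := by
      have hT1c' : T1.card ≤ (Δ + d) * d * B.card := hT1c
      linarith
    calc ((Pd.filter fun q => ¬ CcQ H G v2 v7 q).card : ℤ) ≤
        (((Δ + d) * d * B.card + (Δ + d) * d * B.card + (Δ + d) * d * B.card : ℕ) : ℤ) := by
          exact_mod_cast hfin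
      _ = 3 * (Δ + d) * d * m := by push_cast [hm]; ring
  rcases le_or_gt K 0 with hKle | hKpos
  · rw [max_eq_right hKle, hQeq]
    have h0 : (0 : ℤ) ≤ 3 * (Δ + d) * d * m := by positivity
    have h1 : (0 : ℤ) ≤ ((Pd.filter (CcQ H G v2 v7)).card : ℤ) := Nat.cast_nonneg _
    linarith
  · rw [max_eq_left hKpos.le, hQeq]
    have h8 : (0 : ℤ) ≤ m - 8 * d := by linarith
    have h12 : (0 : ℤ) ≤ m - 12 * d := by
      by_contra h'
      push_neg at h'
      have : K ≤ 0 := mul_nonpos_iff.2 (Or.inl ⟨h8, h'.le⟩)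
      linarith
    -- sigma lower bound on Pd
    set B1 := B.filter (fun b => b.1 ∉ Fset v0 v1 v2 v7 ∧ b.2 ∉ Fset v0 v1 v2 v7) with hB1
    set B2 : (Fin n × Fin n) → Finset (Fin n × Fin n) := fun b1 =>
      B.filter (fun b => b.1 ∉ insert b1.1 (insert b1.2 (Fset v0 v1 v2 v7)) ∧
        b.2 ∉ insert b1.1 (insert b1.2 (Fset v0 v1 v2 v7))) with hB2
    have hsig : (B1.sigma B2).card ≤ Pd.card := by
      apply Finset.card_le_card_of_injOn (fun x => (x.1, x.2))
      · rintro ⟨b1, b2⟩ hx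
        rw [Finset.mem_coe] at hx ⊢
        rw [Finset.mem_sigma] at hx
        obtain ⟨h1, h2⟩ := hx
        rw [hB1, Finset.mem_filter] at h1
        rw [hB2, Finset.mem_filter] at h2
        rw [hPd, Finset.mem_filter]
        exact ⟨Finset.mem_product.2 ⟨h1.1, h2.1⟩, ⟨h1.2, h2.2⟩⟩
      · rintro ⟨a1, a2⟩ - ⟨c1, c2⟩ - h
        have h1 : a1 = c1 := congrArg Prod.fst h
        subst h1
        have h2 : a2 = c2 := congrArg Prod.snd h
        subst h2
        rfl
    have hB2each : ∀ b1 ∈ B1, m - 12 * d ≤ ((B2 b1).card : ℤ) := by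
      intro b1 _
      have hScard : (insert b1.1 (insert b1.2 (Fset v0 v1 v2 v7))).card ≤ 6 := by
        refine le_trans (Finset.card_insert_le _ _) ?_
        refine Nat.add_le_add_right (le_trans (Finset.card_insert_le _ _) ?_) 1
        exact Nat.add_le_add_right (Fset_card v0 v1 v2 v7) 1
      have h := filt_avoid B d hb1 hb2 (insert b1.1 (insert b1.2 (Fset v0 v1 v2 v7)))
      have hc : ((insert b1.1 (insert b1.2 (Fset v0 v1 v2 v7))).card : ℤ) ≤ 6 := by
        exact_mod_cast hScard
      have hd0 : (0 : ℤ) ≤ (d : ℤ) := Nat.cast_nonneg _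
      rw [hB2]
      nlinarith [h]
    have hB1card : m - 8 * d ≤ (B1.card : ℤ) := by
      have h := filt_avoid B d hb1 hb2 (Fset v0 v1 v2 v7)
      have hc : ((Fset v0 v1 v2 v7).card : ℤ) ≤ 4 := by exact_mod_cast Fset_card v0 v1 v2 v7
      have hd0 : (0 : ℤ) ≤ (d : ℤ) := Nat.cast_nonneg _
      rw [hB1]
      nlinarith [h]
    have hPdK : K ≤ (Pd.card : ℤ) := by
      have hsum : ∑ b1 ∈ B1, ((m : ℤ) - 12 * d) ≤ ∑ b1 ∈ B1, ((B2 b1).card : ℤ) :=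
        Finset.sum_le_sum hB2each
      have hconst : ∑ _b1 ∈ B1, ((m : ℤ) - 12 * d) = (B1.card : ℤ) * (m - 12 * d) := by
        rw [Finset.sum_const, nsmul_eq_mul]
      have hsigc : ((B1.sigma B2).card : ℤ) = ∑ b1 ∈ B1, ((B2 b1).card : ℤ) := by
        rw [Finset.card_sigma]
        push_cast
        rfl
      calc K = (m - 8 * d) * (m - 12 * d) := hK
        _ ≤ (B1.card : ℤ) * (m - 12 * d) := mul_le_mul_of_nonneg_right hB1card h12
        _ = ∑ _b1 ∈ B1, ((m : ℤ) - 12 * d) := hconst.symm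
        _ ≤ ∑ b1 ∈ B1, ((B2 b1).card : ℤ) := hsum
        _ = ((B1.sigma B2).card : ℤ) := hsigc.symm
        _ ≤ (Pd.card : ℤ) := by exact_mod_cast hsig
    have hsplit : (Pd.filter (CcQ H G v2 v7)).card +
        (Pd.filter fun q => ¬ CcQ H G v2 v7 q).card = Pd.card :=
      Finset.card_filter_add_card_filter_not (p := CcQ H G v2 v7)
    have hsplitz : ((Pd.filter (CcQ H G v2 v7)).card : ℤ) +
        ((Pd.filter fun q => ¬ CcQ H G v2 v7 q).card : ℤ) = (Pd.card : ℤ) := by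
      exact_mod_cast hsplit
    linarith

lemma distinct8_mk {n : ℕ} {v0 v1 v2 v3 v4 v5 v6 v7 : Fin n}
    (h01 : v0 ≠ v1) (h02 : v0 ≠ v2) (h07 : v0 ≠ v7) (h12 : v1 ≠ v2) (h17 : v1 ≠ v7)
    (h30 : v3 ≠ v0) (h31 : v3 ≠ v1) (h32 : v3 ≠ v2) (h37 : v3 ≠ v7)
    (h40 : v4 ≠ v0) (h41 : v4 ≠ v1) (h42 : v4 ≠ v2) (h47 : v4 ≠ v7)
    (h50 : v5 ≠ v0) (h51 : v5 ≠ v1) (h52 : v5 ≠ v2) (h57 : v5 ≠ v7)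
    (h60 : v6 ≠ v0) (h61 : v6 ≠ v1) (h62 : v6 ≠ v2) (h67 : v6 ≠ v7)
    (h34 : v3 ≠ v4) (h56 : v5 ≠ v6)
    (h53 : v5 ≠ v3) (h54 : v5 ≠ v4) (h63 : v6 ≠ v3) (h64 : v6 ≠ v4) :
    Distinct8 v0 v1 v2 v3 v4 v5 v6 v7 := by
  constructor
  · refine List.Pairwise.cons ?_ (List.Pairwise.cons ?_ (List.Pairwise.cons ?_
      (List.Pairwise.cons ?_ (List.Pairwise.cons ?_ (List.pairwise_singleton _ _)))))
    · intro x hx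
      simp only [List.mem_cons, List.mem_singleton, List.not_mem_nil, or_false] at hx
      rcases hx with rfl | rfl | rfl | rfl | rfl
      exacts [h01, h30.symm, h40.symm, h50.symm, h60.symm]
    · intro x hx
      simp only [List.mem_cons, List.mem_singleton, List.not_mem_nil, or_false] at hx
      rcases hx with rfl | rfl | rfl | rfl
      exacts [h31.symm, h41.symm, h51.symm, h61.symm]
    · intro x hx
      simp only [List.mem_cons, List.mem_singleton, List.not_mem_nil, or_false] at hx
      rcases hx with rfl | rfl | rfl
      exacts [h34, h53.symm, h63.symm]
    · intro x hx
      simp only [List.mem_cons, List.mem_singleton, List.not_mem_nil, or_false] at hx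
      rcases hx with rfl | rfl
      exacts [h54.symm, h64.symm]
    · intro x hx
      simp only [List.mem_cons, List.mem_singleton, List.not_mem_nil, or_false] at hx
      rcases hx with rfl
      exact h56
  · intro x hx
    simp only [List.mem_cons, List.mem_singleton, List.not_mem_nil, or_false] at hx
    rcases hx with rfl | rfl | rfl | rfl | rfl | rfl
    exacts [⟨h02.symm, h07.symm⟩, ⟨h12.symm, h17.symm⟩, ⟨h32.symm, h37.symm⟩,
      ⟨h42.symm, h47.symm⟩, ⟨h52.symm, h57.symm⟩, ⟨h62.symm, h67.symm⟩]

abbrev TupT (n : ℕ) := (p : Fin n × Fin n) × (v0 : Fin n) × (v7 : Fin n) ×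
    ((Fin n × Fin n) × (Fin n × Fin n))

def tupFun {n : ℕ} (x : TupT n) : Fin 8 → Fin n :=
  ![x.2.1, x.1.1, x.1.2, x.2.2.2.1.1, x.2.2.2.1.2, x.2.2.2.2.1, x.2.2.2.2.2, x.2.2.1]

lemma tupFun_inj {n : ℕ} : Function.Injective (tupFun (n := n)) := by
  rintro ⟨⟨a1, a2⟩, a0, a7, ⟨⟨a3, a4⟩, ⟨a5, a6⟩⟩⟩ ⟨⟨b1, b2⟩, b0, b7, ⟨⟨b3, b4⟩, ⟨b5, b6⟩⟩⟩ h
  have h0 : a0 = b0 := congrFun h 0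
  have h1 : a1 = b1 := congrFun h 1
  have h2 : a2 = b2 := congrFun h 2
  have h3 : a3 = b3 := congrFun h 3
  have h4 : a4 = b4 := congrFun h 4
  have h5 : a5 = b5 := congrFun h 5
  have h6 : a6 = b6 := congrFun h 6
  have h7 : a7 = b7 := congrFun h 7
  subst h0 h1 h2 h3 h4 h5 h6 h7
  rfl

end Helpers


set_option maxHeartbeats 1000000 in
/-- Lemma 12. Suppose `H` is `(n-Δ-1)`-regular, `1 ≤ i ≤ (2/3)dΔ`,
`dn ≥ 2i + 10d`, and `G` is `d`-regular with exactly `i` red edges. Then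
`2i(Δ−1)(d−1)(dn−2i−10d)² − 6i(Δ−1)d³n(d+Δ) ≤ b_{B1+}(G) ≤ 2i(Δ−1)d(dn)²`. -/

theorem stmt_14 (n d Δ i : ℕ) (hd : 1 ≤ d) (hΔ1 : 1 ≤ Δ) (hΔ2 : Δ ≤ n - 1)
    (H : SimpleGraph (Fin n)) (hH : H.IsRegularOfDegree (n - Δ - 1))
    (hi1 : 1 ≤ i) (hi2 : 3 * i ≤ 2 * d * Δ) (hdn : 2 * i + 10 * d ≤ d * n)
    (G : SimpleGraph (Fin n)) (hreg : G.IsRegularOfDegree d)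
    (hred : (G ⊓ Hᶜ).edgeSet.ncard = i) :
    (2 * i * ((Δ : ℤ) - 1) * ((d : ℤ) - 1) * (d * n - 2 * i - 10 * d) ^ 2
        - 6 * i * ((Δ : ℤ) - 1) * d ^ 3 * n * (d + Δ)) ≤ (bB1 H G : ℤ) ∧
      (bB1 H G : ℤ) ≤ 2 * i * ((Δ : ℤ) - 1) * d * (d * n) ^ 2 := by
  classical
  -- basic arithmetic facts
  have hn2 : Δ + 1 ≤ n := by omega
  have hHc : Hᶜ.IsRegularOfDegree Δ := compl_regular hn2 hH
  have hRcard : (odarts (G ⊓ Hᶜ)).card = 2 * i := by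
    rw [odarts_card_ncard, hred]
  have hDGcard : (odarts G).card = n * d := odarts_card_reg hreg
  have hBsum : (odarts (G ⊓ H)).card + 2 * i = n * d := by
    have h := odarts_split G H
    rw [hRcard, hDGcard] at h
    exact h
  have hnb : ∀ w, (G.neighborFinset w).card = d := by
    intro w; rw [SimpleGraph.card_neighborFinset_eq_degree]; exact hreg w
  have hnbc : ∀ w, (Hᶜ.neighborFinset w).card = Δ := by
    intro w; rw [SimpleGraph.card_neighborFinset_eq_degree]; exact hHc w
  -- the octagon finset
  set Ω : Finset (Fin 8 → Fin n) := Finset.univ.filter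
      (fun v => OctB1Plus H G (v 0) (v 1) (v 2) (v 3) (v 4) (v 5) (v 6) (v 7)) with hΩdef
  have hbb : bB1 H G = Ω.card := by
    rw [bB1, Nat.card_eq_fintype_card, Fintype.card_subtype]
  set R : Finset (Fin n × Fin n) := odarts (G ⊓ Hᶜ) with hRdef
  constructor
  · -- LOWER BOUND
    set B : Finset (Fin n × Fin n) := odarts (G ⊓ H) with hBdef
    have hBsub : B ⊆ odarts G := by
      intro b hb
      rw [hBdef, mem_odarts] at hb
      exact mem_odarts.2 hb.1
    have hb1 : ∀ w, (B.filter fun b => b.1 = w).card ≤ d := by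
      intro w
      calc (B.filter fun b => b.1 = w).card
          ≤ ((odarts G).filter fun b => b.1 = w).card :=
            Finset.card_le_card (Finset.filter_subset_filter _ hBsub)
        _ = G.degree w := odarts_fst G w
        _ = d := hreg w
    have hb2 : ∀ w, (B.filter fun b => b.2 = w).card ≤ d := by
      intro w
      calc (B.filter fun b => b.2 = w).card
          ≤ ((odarts G).filter fun b => b.2 = w).card :=
            Finset.card_le_card (Finset.filter_subset_filter _ hBsub)
        _ = G.degree w := odarts_snd G w
        _ = d := hreg w
    have hmz : (B.card : ℤ) = d * n - 2 * i := by
      have h2 : (B.card : ℤ) + 2 * i = (n : ℤ) * d := by exact_mod_cast hBsum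
      have hc : (n : ℤ) * d = (d : ℤ) * n := mul_comm _ _
      linarith
    have hdnz : 2 * (i : ℤ) + 10 * d ≤ (d : ℤ) * n := by exact_mod_cast hdn
    have hd0 : (0 : ℤ) ≤ (d : ℤ) := Nat.cast_nonneg d
    have hm8 : (8 : ℤ) * d ≤ (B.card : ℤ) := by rw [hmz]; linarith
    -- building blocks
    set A : (Fin n × Fin n) → Finset (Fin n) := fun p => Hᶜ.neighborFinset p.1 \ {p.2}
      with hAdef
    set W : (Fin n × Fin n) → Fin n → Finset (Fin n) := fun p v0 =>
      G.neighborFinset v0 \ {p.1} with hWdef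
    set Qf : (Fin n × Fin n) → Fin n → Fin n → Finset ((Fin n × Fin n) × (Fin n × Fin n)) :=
      fun p v0 v7 => (B ×ˢ B).filter (fun q => DpartQ p.1 p.2 v0 v7 q ∧ CcQ H G p.2 v7 q)
      with hQdef
    set LT := R.sigma (fun p => (A p).sigma (fun v0 => (W p v0).sigma (fun v7 => Qf p v0 v7)))
      with hLTdef
    -- injection into octagons
    have hmaps2 : ∀ x ∈ LT, tupFun x ∈ Ω := by
      rintro ⟨⟨a1, a2⟩, a0, a7, ⟨⟨a3, a4⟩, ⟨a5, a6⟩⟩⟩ hx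
      simp only [hLTdef, Finset.mem_sigma] at hx
      obtain ⟨hp, h0, h7, hq⟩ := hx
      rw [hRdef, mem_odarts] at hp
      rw [SimpleGraph.inf_adj] at hp
      obtain ⟨hG12, hH12⟩ := hp
      rw [hAdef] at h0
      simp only [Finset.mem_sdiff, SimpleGraph.mem_neighborFinset, Finset.mem_singleton] at h0
      obtain ⟨hH10, h02⟩ := h0
      rw [hWdef] at h7
      simp only [Finset.mem_sdiff, SimpleGraph.mem_neighborFinset, Finset.mem_singleton] at h7
      obtain ⟨hG07, h71⟩ := h7
      rw [hQdef] at hq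
      simp only [Finset.mem_filter, Finset.mem_product, hBdef, mem_odarts,
        SimpleGraph.inf_adj] at hq
      obtain ⟨⟨⟨hG34, hH34⟩, ⟨hG56, hH56⟩⟩, hD, hC⟩ := hq
      obtain ⟨⟨hD3, hD4⟩, hD5, hD6⟩ := hD
      obtain ⟨h30, h31, h32, h37⟩ : a3 ≠ a0 ∧ a3 ≠ a1 ∧ a3 ≠ a2 ∧ a3 ≠ a7 := by
        simpa [Fset] using hD3
      obtain ⟨h40, h41, h42, h47⟩ : a4 ≠ a0 ∧ a4 ≠ a1 ∧ a4 ≠ a2 ∧ a4 ≠ a7 := by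
        simpa [Fset] using hD4
      obtain ⟨h53, h54, h50, h51, h52, h57⟩ :
          a5 ≠ a3 ∧ a5 ≠ a4 ∧ a5 ≠ a0 ∧ a5 ≠ a1 ∧ a5 ≠ a2 ∧ a5 ≠ a7 := by
        simpa [Fset] using hD5
      obtain ⟨h63, h64, h60, h61, h62, h67⟩ :
          a6 ≠ a3 ∧ a6 ≠ a4 ∧ a6 ≠ a0 ∧ a6 ≠ a1 ∧ a6 ≠ a2 ∧ a6 ≠ a7 := by
        simpa [Fset] using hD6
      obtain ⟨hC1, hC2, hC3⟩ := hC
      rw [hΩdef, Finset.mem_filter]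
      refine ⟨Finset.mem_univ _, ?_⟩
      show OctB1Plus H G a0 a1 a2 a3 a4 a5 a6 a7
      refine ⟨⟨hG12, hH12⟩, hH10.symm, hG07, ⟨hG34, hH34⟩, ⟨hG56, hH56⟩, hC1, hC2, hC3, ?_⟩
      exact distinct8_mk hH10.symm.ne h02 hG07.ne hG12.ne (Ne.symm h71)
        h30 h31 h32 h37 h40 h41 h42 h47 h50 h51 h52 h57 h60 h61 h62 h67
        hG34.ne hG56.ne h53 h54 h63 h64
    have hcard2 : LT.card ≤ Ω.card :=
      Finset.card_le_card_of_injOn tupFun hmaps2 (tupFun_inj.injOn)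
    -- card of LT as a triple sum
    have hLTn : LT.card = ∑ p ∈ R, ∑ v0 ∈ A p, ∑ v7 ∈ W p v0, (Qf p v0 v7).card := by
      rw [hLTdef, Finset.card_sigma]
      refine Finset.sum_congr rfl fun p _ => ?_
      rw [Finset.card_sigma]
      refine Finset.sum_congr rfl fun v0 _ => ?_
      rw [Finset.card_sigma]
    have hLTz : (LT.card : ℤ) =
        ∑ p ∈ R, ∑ v0 ∈ A p, ∑ v7 ∈ W p v0, ((Qf p v0 v7).card : ℤ) := by
      rw [hLTn]
      push_cast
      rfl
    -- per-(p,v0) bound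
    have hv7 : ∀ (p : Fin n × Fin n) (v0 : Fin n),
        ((d : ℤ) - 1) * (max (((B.card : ℤ) - 8 * d) * ((B.card : ℤ) - 12 * d)) 0)
          - d * (3 * ((Δ : ℤ) + d) * d * B.card) ≤
          ∑ v7 ∈ W p v0, ((Qf p v0 v7).card : ℤ) := by
      intro p v0
      have hkey : ∀ v7 ∈ W p v0,
          max (((B.card : ℤ) - 8 * d) * ((B.card : ℤ) - 12 * d)) 0
            - 3 * ((Δ : ℤ) + d) * d * B.card ≤ ((Qf p v0 v7).card : ℤ) := by
        intro v7 _
        have h := key_bound H G B hb1 hb2 (fun w => le_of_eq (hnb w))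
          (fun w => le_of_eq (hnbc w)) hm8 p.1 p.2 v0 v7
        simp only [hQdef]
        exact h
      have hsum := Finset.card_nsmul_le_sum (W p v0) _ _ hkey
      rw [nsmul_eq_mul] at hsum
      have hWle : ((W p v0).card : ℤ) ≤ d := by
        have h : (W p v0).card ≤ d := by
          rw [hWdef]
          calc (G.neighborFinset v0 \ {p.1}).card ≤ (G.neighborFinset v0).card :=
              Finset.card_le_card Finset.sdiff_subset
            _ = d := hnb v0
        exact_mod_cast h
      have hWge : (d : ℤ) - 1 ≤ ((W p v0).card : ℤ) := by
        have h1 : d ≤ (W p v0).card + 1 := by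
          rw [hWdef]
          have h := Finset.card_le_card_sdiff_add_card
            (s := G.neighborFinset v0) (t := {p.1})
          rw [Finset.card_singleton] at h
          calc d = (G.neighborFinset v0).card := (hnb v0).symm
            _ ≤ _ := h
        have h2 : (d : ℤ) ≤ ((W p v0).card : ℤ) + 1 := by exact_mod_cast h1
        linarith
      have hMK0 : (0 : ℤ) ≤ max (((B.card : ℤ) - 8 * d) * ((B.card : ℤ) - 12 * d)) 0 :=
        le_max_right _ _
      have hbad0 : (0 : ℤ) ≤ 3 * ((Δ : ℤ) + d) * d * B.card := by
        have hΔ0 : (0 : ℤ) ≤ (Δ : ℤ) := Nat.cast_nonneg _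
        have hB0 : (0 : ℤ) ≤ (B.card : ℤ) := Nat.cast_nonneg _
        exact mul_nonneg (mul_nonneg (by linarith) hd0) hB0
      nlinarith [hsum, hWle, hWge, hMK0, hbad0]
    have hv0 : ∀ p ∈ R, ((Δ : ℤ) - 1) *
        (((d : ℤ) - 1) * (max (((B.card : ℤ) - 8 * d) * ((B.card : ℤ) - 12 * d)) 0)
          - d * (3 * ((Δ : ℤ) + d) * d * B.card)) ≤
        ∑ v0 ∈ A p, ∑ v7 ∈ W p v0, ((Qf p v0 v7).card : ℤ) := by
      intro p hp
      have hpR : (G ⊓ Hᶜ).Adj p.1 p.2 := by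
        have h := hp
        rw [hRdef, mem_odarts] at h
        exact h
      have hmem : p.2 ∈ Hᶜ.neighborFinset p.1 :=
        (SimpleGraph.mem_neighborFinset _ _ _).2 hpR.2
      have hAc : ((A p).card : ℤ) = (Δ : ℤ) - 1 := by
        have hcard : (A p).card = Δ - 1 := by
          rw [hAdef]
          simp only []
          rw [Finset.card_sdiff_of_subset (Finset.singleton_subset_iff.2 hmem),
            Finset.card_singleton, hnbc p.1]
        rw [hcard, Nat.cast_sub hΔ1, Nat.cast_one]
      have hsum := Finset.card_nsmul_le_sum (A p) _ _ (fun v0 _ => hv7 p v0)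
      rw [nsmul_eq_mul, hAc] at hsum
      exact hsum
    have htop : (2 * (i : ℤ)) * (((Δ : ℤ) - 1) *
        (((d : ℤ) - 1) * (max (((B.card : ℤ) - 8 * d) * ((B.card : ℤ) - 12 * d)) 0)
          - d * (3 * ((Δ : ℤ) + d) * d * B.card))) ≤
        ∑ p ∈ R, ∑ v0 ∈ A p, ∑ v7 ∈ W p v0, ((Qf p v0 v7).card : ℤ) := by
      have hsum := Finset.card_nsmul_le_sum R _ _ hv0
      rw [nsmul_eq_mul] at hsum
      have hRz : ((R.card : ℕ) : ℤ) = 2 * i := by exact_mod_cast hRcard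
      rw [hRz] at hsum
      exact hsum
    -- final arithmetic
    have hd1 : (1 : ℤ) ≤ d := by exact_mod_cast hd
    have hΔ1z : (1 : ℤ) ≤ Δ := by exact_mod_cast hΔ1
    have hi1z : (1 : ℤ) ≤ i := by exact_mod_cast hi1
    have hMKge : ((d : ℤ) * n - 2 * i - 10 * d) ^ 2 - 4 * d ^ 2 ≤
        max (((B.card : ℤ) - 8 * d) * ((B.card : ℤ) - 12 * d)) 0 := by
      refine le_trans (le_of_eq ?_) (le_max_left _ _)
      rw [hmz]
      ring
    have hYge : ((d : ℤ) - 1) * ((d : ℤ) * n - 2 * i - 10 * d) ^ 2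
        - 3 * (d : ℤ) ^ 3 * n * ((d : ℤ) + Δ) ≤
        ((d : ℤ) - 1) * (max (((B.card : ℤ) - 8 * d) * ((B.card : ℤ) - 12 * d)) 0)
          - d * (3 * ((Δ : ℤ) + d) * d * B.card) := by
      have h1 : ((d : ℤ) - 1) * (((d : ℤ) * n - 2 * i - 10 * d) ^ 2 - 4 * d ^ 2) ≤
          ((d : ℤ) - 1) * (max (((B.card : ℤ) - 8 * d) * ((B.card : ℤ) - 12 * d)) 0) :=
        mul_le_mul_of_nonneg_left hMKge (by linarith)
      have haux : 4 * (d : ℤ) ^ 2 * ((d : ℤ) - 1) ≤ 6 * (i : ℤ) * d ^ 2 * ((Δ : ℤ) + d) := by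
        have hpos : (0 : ℤ) ≤ ((Δ : ℤ) + d) * d ^ 2 := by positivity
        nlinarith [hpos, hi1z, hd1, hΔ1z]
      have hBm : (d : ℤ) * (3 * ((Δ : ℤ) + d) * d * B.card) =
          3 * ((Δ : ℤ) + d) * d ^ 2 * ((d : ℤ) * n - 2 * i) := by
        rw [hmz]; ring
      nlinarith [h1, haux, hBm]
    have hnn : (0 : ℤ) ≤ 2 * (i : ℤ) * ((Δ : ℤ) - 1) := by nlinarith [hi1z, hΔ1z]
    calc 2 * (i : ℤ) * ((Δ : ℤ) - 1) * ((d : ℤ) - 1) *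
            ((d : ℤ) * n - 2 * i - 10 * d) ^ 2
          - 6 * i * ((Δ : ℤ) - 1) * d ^ 3 * n * ((d : ℤ) + Δ)
        = (2 * (i : ℤ) * ((Δ : ℤ) - 1)) *
            (((d : ℤ) - 1) * ((d : ℤ) * n - 2 * i - 10 * d) ^ 2
              - 3 * (d : ℤ) ^ 3 * n * ((d : ℤ) + Δ)) := by ring
      _ ≤ (2 * (i : ℤ) * ((Δ : ℤ) - 1)) *
            (((d : ℤ) - 1) * (max (((B.card : ℤ) - 8 * d) * ((B.card : ℤ) - 12 * d)) 0)
              - d * (3 * ((Δ : ℤ) + d) * d * B.card)) :=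
          mul_le_mul_of_nonneg_left hYge hnn
      _ = (2 * (i : ℤ)) * (((Δ : ℤ) - 1) *
            (((d : ℤ) - 1) * (max (((B.card : ℤ) - 8 * d) * ((B.card : ℤ) - 12 * d)) 0)
              - d * (3 * ((Δ : ℤ) + d) * d * B.card))) := by ring
      _ ≤ ∑ p ∈ R, ∑ v0 ∈ A p, ∑ v7 ∈ W p v0, ((Qf p v0 v7).card : ℤ) := htop
      _ = (LT.card : ℤ) := hLTz.symm
      _ ≤ (Ω.card : ℤ) := by exact_mod_cast hcard2
      _ = (bB1 H G : ℤ) := by rw [hbb]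
  · -- UPPER BOUND
    set UT : Finset (TupT n) := R.sigma (fun p =>
        ((Hᶜ.neighborFinset p.1 \ {p.2}).sigma (fun v0 =>
          ((G.neighborFinset v0).sigma (fun _ => (odarts G) ×ˢ (odarts G)))))) with hUTdef
    have hmaps : ∀ v ∈ Ω, (⟨(v 1, v 2), v 0, v 7, ((v 3, v 4), (v 5, v 6))⟩ : TupT n) ∈ UT := by
      intro v hv
      rw [hΩdef, Finset.mem_filter] at hv
      obtain ⟨-, h⟩ := hv
      obtain ⟨⟨hG12, hH12⟩, hH01, hG07, ⟨hG34, hH34⟩, ⟨hG56, hH56⟩, -, -, -, hdist⟩ := h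
      have hv0ne2 : v 0 ≠ v 2 := by
        have h2 := (hdist.2 (v 0) (by simp)).1
        exact fun hx => h2 hx.symm
      rw [hUTdef]
      refine Finset.mem_sigma.2 ⟨?_, Finset.mem_sigma.2 ⟨?_, Finset.mem_sigma.2 ⟨?_, ?_⟩⟩⟩
      · rw [hRdef, mem_odarts]; exact ⟨hG12, hH12⟩
      · rw [Finset.mem_sdiff, SimpleGraph.mem_neighborFinset, Finset.mem_singleton]
        exact ⟨hH01.symm, hv0ne2⟩
      · rw [SimpleGraph.mem_neighborFinset]; exact hG07
      · rw [Finset.mem_product, mem_odarts, mem_odarts]; exact ⟨hG34, hG56⟩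
    have hinj : Set.InjOn (fun v : Fin 8 → Fin n =>
        (⟨(v 1, v 2), v 0, v 7, ((v 3, v 4), (v 5, v 6))⟩ : TupT n)) Ω := by
      intro u _ w _ h
      have h2 : tupFun (⟨(u 1, u 2), u 0, u 7, ((u 3, u 4), (u 5, u 6))⟩ : TupT n) =
          tupFun (⟨(w 1, w 2), w 0, w 7, ((w 3, w 4), (w 5, w 6))⟩ : TupT n) :=
        congrArg tupFun h
      funext j
      fin_cases j
      · exact congrFun h2 0
      · exact congrFun h2 1
      · exact congrFun h2 2
      · exact congrFun h2 3
      · exact congrFun h2 4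
      · exact congrFun h2 5
      · exact congrFun h2 6
      · exact congrFun h2 7
    have hcard1 : Ω.card ≤ UT.card := Finset.card_le_card_of_injOn _ hmaps hinj
    have hUT : UT.card = 2 * i * ((Δ - 1) * (d * ((n * d) * (n * d)))) := by
      rw [hUTdef, Finset.card_sigma]
      have hinner : ∀ p ∈ R, ((Hᶜ.neighborFinset p.1 \ {p.2}).sigma (fun v0 =>
          ((G.neighborFinset v0).sigma (fun _ => (odarts G) ×ˢ (odarts G))))).card
          = (Δ - 1) * (d * ((n * d) * (n * d))) := by
        intro p hp
        rw [Finset.card_sigma]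
        have h2 : ∀ v0 ∈ Hᶜ.neighborFinset p.1 \ {p.2},
            ((G.neighborFinset v0).sigma (fun _ => (odarts G) ×ˢ (odarts G))).card
            = d * ((n * d) * (n * d)) := by
          intro v0 _
          rw [Finset.card_sigma]
          have h3 : ∀ v7 ∈ G.neighborFinset v0, ((odarts G) ×ˢ (odarts G)).card
              = (n * d) * (n * d) := by
            intro v7 _
            rw [Finset.card_product, hDGcard]
          rw [Finset.sum_congr rfl h3, Finset.sum_const, smul_eq_mul,
            SimpleGraph.card_neighborFinset_eq_degree, hreg v0]
        rw [Finset.sum_congr rfl h2, Finset.sum_const, smul_eq_mul]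
        congr 1
        have hpR : (G ⊓ Hᶜ).Adj p.1 p.2 := by
          have h := hp
          rw [hRdef, mem_odarts] at h
          exact h
        have hmem : p.2 ∈ Hᶜ.neighborFinset p.1 := by
          rw [SimpleGraph.mem_neighborFinset]; exact hpR.2
        rw [Finset.card_sdiff_of_subset (Finset.singleton_subset_iff.2 hmem), Finset.card_singleton,
          SimpleGraph.card_neighborFinset_eq_degree, hHc p.1]
      rw [Finset.sum_congr rfl hinner, Finset.sum_const, smul_eq_mul, hRcard]
    have hfinal : bB1 H G ≤ 2 * i * ((Δ - 1) * (d * ((n * d) * (n * d)))) := by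
      rw [hbb]; exact le_trans hcard1 (le_of_eq hUT)
    have hfz : (bB1 H G : ℤ) ≤ 2 * i * (((Δ : ℤ) - 1) * (d * ((n * d) * (n * d)))) := by
      have h2 := (Nat.cast_le (α := ℤ)).2 hfinal
      push_cast [Nat.cast_sub hΔ1] at h2
      convert h2 using 2
    calc (bB1 H G : ℤ) ≤ _ := hfz
      _ = 2 * i * ((Δ : ℤ) - 1) * d * (d * n) ^ 2 := by ring
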